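/- Let G be a Lie group acting on a manifold Q, L_d : Q × Q → ℝ invariant under the diagonal action, and suppose ξ ∈ 𝔤 is a horizontal symmetry (ξ_Q(q) ∈ D_q for all q, where D is the constraint distribution). If a sequence (q_k) satisfies the discrete nonholonomic equations (P − Q)*(D₁L_d(q_k, q_{k+1})) + D₂L_d(q_{k−1}, q_k) = 0, then the momentum component J_ξ(q_{k−1}, q_k) = ⟨D₂L_d(q_{k−1}, q_k), ξ_Q(q_k)⟩ is constant in k. -/

import Mathlib

open Manifold

/-- Conservation of the nonholonomic momentum component of a
horizontal symmetry.  `G` acts on the manifold `Q`, `L_d : Q × Q → ℝ` is smooth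
and `G`-invariant, `D` is a distribution with projectors `P` onto `D` and
`Qproj` onto `D^⊥` on each tangent space, and `ξ` is a horizontal symmetry:
its infinitesimal generator `ξ_Q(q) = d/ds|₀ (c(s)·q)` (for the one-parameter
family `c` with `c 0 = 1`) lies in `D_q` for all `q`.  If the sequence `(q_k)`
satisfies the discrete nonholonomic equations
`(P - Q)*(D₁L_d(q_k, q_{k+1})) + D₂L_d(q_{k-1}, q_k) = 0`, then the momentum
component `J_ξ(q_{k-1}, q_k) = ⟨D₂L_d(q_{k-1}, q_k), ξ_Q(q_k)⟩` is constant. -/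
theorem horizontal_symmetry_momentum_conservation
    {E : Type*} [NormedAddCommGroup E] [NormedSpace ℝ E]
    {H : Type*} [TopologicalSpace H] (I : ModelWithCorners ℝ E H)
    {Q : Type*} [TopologicalSpace Q] [ChartedSpace H Q] [IsManifold I (⊤ : ℕ∞) Q]
    {G : Type*} [Group G] [MulAction G Q]
    (Ld : Q → Q → ℝ)
    (hLd : ContMDiff (I.prod I) 𝓘(ℝ, ℝ) (⊤ : ℕ∞) (fun p : Q × Q => Ld p.1 p.2))
    (hinv : ∀ (g : G) (q₀ q₁ : Q), Ld (g • q₀) (g • q₁) = Ld q₀ q₁)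
    (c : ℝ → G) (hc0 : c 0 = 1)
    (hcact : ContMDiff (𝓘(ℝ, ℝ).prod I) I (⊤ : ℕ∞) (fun p : ℝ × Q => c p.1 • p.2))
    (ξQ : (q : Q) → TangentSpace I q)
    (hξQ : ∀ q : Q, ξQ q = mfderiv 𝓘(ℝ, ℝ) I (fun s : ℝ => c s • q) 0 (1 : ℝ))
    -- the constraint distribution and the orthogonal projectors at each point
    (D : (q : Q) → Submodule ℝ (TangentSpace I q))
    (P Qproj : (q : Q) → TangentSpace I q →ₗ[ℝ] TangentSpace I q)
    (hPD : ∀ (q : Q) (v : TangentSpace I q), v ∈ D q → P q v = v)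
    (hQD : ∀ (q : Q) (v : TangentSpace I q), v ∈ D q → Qproj q v = 0)
    -- ξ is a horizontal symmetry
    (hhoriz : ∀ q : Q, ξQ q ∈ D q)
    -- the discrete trajectory and the discrete nonholonomic equations
    (qs : ℕ → Q)
    (heqns : ∀ (k : ℕ) (v : TangentSpace I (qs (k+1))),
      (show ℝ from mfderiv I 𝓘(ℝ, ℝ) (fun q => Ld q (qs (k+2))) (qs (k+1))
          (P (qs (k+1)) v - Qproj (qs (k+1)) v))
        + (show ℝ from mfderiv I 𝓘(ℝ, ℝ) (fun q => Ld (qs k) q) (qs (k+1)) v) = 0) :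
    ∀ k : ℕ,
      (show ℝ from mfderiv I 𝓘(ℝ, ℝ) (fun q => Ld (qs (k+1)) q) (qs (k+2)) (ξQ (qs (k+2))))
        = (show ℝ from mfderiv I 𝓘(ℝ, ℝ) (fun q => Ld (qs k) q) (qs (k+1)) (ξQ (qs (k+1)))) := by
  -- smoothness of the orbit maps
  have horbit : ∀ q : Q, ContMDiff 𝓘(ℝ, ℝ) I (⊤ : ℕ∞) (fun s : ℝ => c s • q) := by
    intro q
    have : (fun s : ℝ => c s • q) = (fun p : ℝ × Q => c p.1 • p.2) ∘ fun s : ℝ => (s, q) := rfl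
    rw [this]
    exact hcact.comp (contMDiff_id.prodMk contMDiff_const)
  -- Key invariance identity: D₁Ld(q₀,q₁)(ξQ q₀) + D₂Ld(q₀,q₁)(ξQ q₁) = 0
  have key : ∀ q₀ q₁ : Q,
      (mfderiv I 𝓘(ℝ, ℝ) (fun q => Ld q q₁) q₀ (ξQ q₀) : ℝ)
        + (mfderiv I 𝓘(ℝ, ℝ) (fun q => Ld q₀ q) q₁ (ξQ q₁) : ℝ) = 0 := by
    intro q₀ q₁
    set φ : ℝ → Q × Q := fun s => (c s • q₀, c s • q₁) with hφ
    have hφ0 : φ 0 = (q₀, q₁) := by simp [hφ, hc0]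
    have hφd : ContMDiff 𝓘(ℝ, ℝ) (I.prod I) (⊤ : ℕ∞) φ :=
      (horbit q₀).prodMk (horbit q₁)
    have hLdp : MDifferentiableAt (I.prod I) 𝓘(ℝ, ℝ) (fun p : Q × Q => Ld p.1 p.2) (q₀, q₁) :=
      (hLd (q₀, q₁)).mdifferentiableAt (by simp)
    -- the composite is constant
    have hconst : (fun s : ℝ => Ld (c s • q₀) (c s • q₁)) = fun _ => Ld q₀ q₁ := by
      funext s; exact hinv (c s) q₀ q₁
    have hcomp0 : mfderiv 𝓘(ℝ, ℝ) 𝓘(ℝ, ℝ) (fun s : ℝ => Ld (c s • q₀) (c s • q₁)) 0 = 0 := by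
      rw [hconst]; exact mfderiv_const
    -- chain rule
    have hchain : mfderiv 𝓘(ℝ, ℝ) 𝓘(ℝ, ℝ) ((fun p : Q × Q => Ld p.1 p.2) ∘ φ) 0 =
        (mfderiv (I.prod I) 𝓘(ℝ, ℝ) (fun p : Q × Q => Ld p.1 p.2) (q₀, q₁)).comp
          (mfderiv 𝓘(ℝ, ℝ) (I.prod I) φ 0) := by
      have := mfderiv_comp_of_eq (I' := I.prod I)
        (f := φ) (g := fun p : Q × Q => Ld p.1 p.2) (x := (0 : ℝ)) (y := (q₀, q₁))
        hLdp (hφd.mdifferentiableAt (by simp)) hφ0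
      rw [hφ0] at this
      exact this
    have hφderiv : mfderiv 𝓘(ℝ, ℝ) (I.prod I) φ 0 (1 : ℝ) = (ξQ q₀, ξQ q₁) := by
      rw [hφ, MDifferentiableAt.mfderiv_prod
        (((horbit q₀) 0).mdifferentiableAt (by simp))
        (((horbit q₁) 0).mdifferentiableAt (by simp))]
      rw [hξQ, hξQ]; rfl
    have h0 : (mfderiv (I.prod I) 𝓘(ℝ, ℝ) (fun p : Q × Q => Ld p.1 p.2) (q₀, q₁))
        (ξQ q₀, ξQ q₁) = 0 := by
      have hfun : ((fun p : Q × Q => Ld p.1 p.2) ∘ φ) = fun s : ℝ => Ld (c s • q₀) (c s • q₁) :=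
        rfl
      have hc : (mfderiv 𝓘(ℝ, ℝ) 𝓘(ℝ, ℝ) ((fun p : Q × Q => Ld p.1 p.2) ∘ φ) 0) ((1 : ℝ))
          = (mfderiv (I.prod I) 𝓘(ℝ, ℝ) (fun p : Q × Q => Ld p.1 p.2) (q₀, q₁))
            ((mfderiv 𝓘(ℝ, ℝ) (I.prod I) φ 0) ((1 : ℝ))) :=
        congrFun (congrArg DFunLike.coe hchain) ((1 : ℝ))
      rw [hφderiv] at hc
      refine hc.symm.trans ?_
      rw [hfun, hcomp0]
      rfl
    have hsum := mfderiv_prod_eq_add_apply (I := I) (I' := I) (I'' := 𝓘(ℝ, ℝ))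
      (f := fun p : Q × Q => Ld p.1 p.2) (p := (q₀, q₁)) (v := (ξQ q₀, ξQ q₁)) hLdp
    rw [h0] at hsum
    exact hsum.symm
  intro k
  have heq := heqns k (ξQ (qs (k+1)))
  rw [hPD _ _ (hhoriz (qs (k+1))), hQD _ _ (hhoriz (qs (k+1))), sub_zero] at heq
  have hk := key (qs (k+1)) (qs (k+2))
  let A : ℝ := mfderiv I 𝓘(ℝ, ℝ) (fun q => Ld q (qs (k+2))) (qs (k+1)) (ξQ (qs (k+1)))
  let B : ℝ := mfderiv I 𝓘(ℝ, ℝ) (fun q => Ld (qs k) q) (qs (k+1)) (ξQ (qs (k+1)))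
  let C : ℝ := mfderiv I 𝓘(ℝ, ℝ) (fun q => Ld (qs (k+1)) q) (qs (k+2)) (ξQ (qs (k+2)))
  have h1 : A + B = 0 := heq
  have h2 : A + C = 0 := hk
  show C = B
  linear_combination h2 - h1
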